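/- The interleaving distance between the line mapper cosheaf $L$ and the torus mapper cosheaf $T_h$ with loop of height $h$ is $d_I(L, T_h) = \lceil h/4 \rceil$. -/

import Mathlib

variable {α : Type*} [Preorder α]

/-- The up-set of a subset of a poset. -/
def upSet (S : Set α) : Set α := {u | ∃ v ∈ S, v ≤ u}

/-- The down-set of a subset of a poset. -/
def downSet (S : Set α) : Set α := {u | ∃ v ∈ S, u ≤ v}

/-- The `n`-fold Alexandrov thickening `S^n`. -/
def thicken (S : Set α) : ℕ → Set α
  | 0 => S
  | n + 1 => downSet (upSet (thicken S n))

lemma subset_downUp (S : Set α) : S ⊆ downSet (upSet S) :=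
  fun u hu => ⟨u, ⟨u, hu, le_refl u⟩, le_refl u⟩

lemma self_subset_thicken (S : Set α) : ∀ n : ℕ, S ⊆ thicken S n
  | 0 => Set.Subset.rfl
  | n + 1 => (self_subset_thicken S n).trans (subset_downUp _)

lemma thicken_le (S : Set α) {m n : ℕ} (h : m ≤ n) : thicken S m ⊆ thicken S n := by
  induction h with
  | refl => exact Set.Subset.rfl
  | step _ ih => exact ih.trans (subset_downUp _)

lemma thicken_subset {S T : Set α} (h : S ⊆ T) : ∀ n : ℕ, thicken S n ⊆ thicken T n := by
  intro n
  induction n with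
  | zero => exact h
  | succ n ih =>
    rintro u ⟨v, ⟨w, hw, hwv⟩, huv⟩
    exact ⟨v, ⟨w, ih hw, hwv⟩, huv⟩

lemma thicken_thicken (S : Set α) (m : ℕ) :
    ∀ n : ℕ, thicken (thicken S m) n = thicken S (m + n)
  | 0 => rfl
  | n + 1 => by
    show downSet (upSet (thicken (thicken S m) n)) = downSet (upSet (thicken S (m + n)))
    rw [thicken_thicken S m n]
/-- A `Set`-valued functor on the Alexandrov-open sets of the poset `α`
(the data of a mapper cosheaf). -/
structure MapperCosheaf (α : Type*) [Preorder α] where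
  obj : Set α → Type*
  map : ∀ ⦃S T : Set α⦄, S ⊆ T → obj S → obj T
  map_id : ∀ (S : Set α) (a : obj S), map (Set.Subset.refl S) a = a
  map_comp : ∀ ⦃S T U : Set α⦄ (h₁ : S ⊆ T) (h₂ : T ⊆ U) (a : obj S),
      map h₂ (map h₁ a) = map (h₁.trans h₂) a

/-- The distance `d_S^F(A,B)`: the least `k` with
`F[S ⊆ S^k](A) = F[S ⊆ S^k](B)`, or `∞` if none exists. -/
noncomputable def fdist (F : MapperCosheaf α) (S : Set α) (A B : F.obj S) : ℕ∞ :=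
  sInf {x : ℕ∞ | ∃ k : ℕ, x = (k : ℕ∞) ∧
    F.map (self_subset_thicken S k) A = F.map (self_subset_thicken S k) B}

/-- An `n`-interleaving between two mapper cosheaves. -/
def IsInterleaving (F G : MapperCosheaf α) (n : ℕ) : Prop :=
  ∃ (φ : ∀ S : Set α, F.obj S → G.obj (thicken S n))
    (ψ : ∀ S : Set α, G.obj S → F.obj (thicken S n)),
    (∀ ⦃S T : Set α⦄, downSet S = S → downSet T = T → ∀ (h : S ⊆ T) (a : F.obj S),
        G.map (thicken_subset h n) (φ S a) = φ T (F.map h a)) ∧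
    (∀ ⦃S T : Set α⦄, downSet S = S → downSet T = T → ∀ (h : S ⊆ T) (a : G.obj S),
        F.map (thicken_subset h n) (ψ S a) = ψ T (G.map h a)) ∧
    (∀ S : Set α, downSet S = S → ∀ a : F.obj S,
        F.map (thicken_thicken S n n).subset (ψ (thicken S n) (φ S a)) =
          F.map (self_subset_thicken S (n + n)) a) ∧
    (∀ S : Set α, downSet S = S → ∀ a : G.obj S,
        G.map (thicken_thicken S n n).subset (φ (thicken S n) (ψ S a)) =
          G.map (self_subset_thicken S (n + n)) a)

/-- The interleaving distance between mapper cosheaves. -/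
noncomputable def interleavingDist (F G : MapperCosheaf α) : ℕ∞ :=
  sInf {x : ℕ∞ | ∃ n : ℕ, x = (n : ℕ∞) ∧ IsInterleaving F G n}
/-- The vertex cover element `U_{σ_i} = ((i-1)δ, (i+1)δ)`. -/
def Usig (δ : ℝ) (i : ℤ) : Set ℝ := Set.Ioo (((i : ℝ) - 1) * δ) (((i : ℝ) + 1) * δ)

/-- The edge cover element `U_{τ_i} = (iδ, (i+1)δ)`. -/
def Utau (δ : ℝ) (i : ℤ) : Set ℝ := Set.Ioo ((i : ℝ) * δ) (((i : ℝ) + 1) * δ)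

/-- The cover `𝒰` of `ℝ`. -/
def Cover (δ : ℝ) : Set (Set ℝ) := Set.range (Usig δ) ∪ Set.range (Utau δ)

/-- The cover poset `𝒰`, ordered by set inclusion. -/
abbrev CoverPoset (δ : ℝ) := {U : Set ℝ // U ∈ Cover δ}

/-- `U_{σ_i}` as an element of the cover poset. -/
def sigC (δ : ℝ) (i : ℤ) : CoverPoset δ := ⟨Usig δ i, Or.inl ⟨i, rfl⟩⟩

/-- `U_{τ_i}` as an element of the cover poset. -/
def tauC (δ : ℝ) (i : ℤ) : CoverPoset δ := ⟨Utau δ i, Or.inr ⟨i, rfl⟩⟩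

/-- Geometric realization `|S| = ⋃_{U ∈ S} U`. -/
def geomReal {δ : ℝ} (S : Set (CoverPoset δ)) : Set ℝ := {x | ∃ U ∈ S, x ∈ (U : Set ℝ)}
/-- The set of connected components of the subspace `A` of `X`. -/
def Pi0 {X : Type*} [TopologicalSpace X] (A : Set X) : Type _ :=
  Quot (fun x y : A => (y : X) ∈ connectedComponentIn A (x : X))

/-- The map on connected components induced by an inclusion `A ⊆ B`. -/
def Pi0.map {X : Type*} [TopologicalSpace X] {A B : Set X} (h : A ⊆ B) :
    Pi0 A → Pi0 B :=
  Quot.lift (fun x => Quot.mk _ (Set.inclusion h x))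
    (fun x _ hxy => Quot.sound (connectedComponentIn_mono (x : X) h hxy))

/-- Geometric realization of a set of cover elements. -/
def geomRealization {δ : ℝ} (S : Set (CoverPoset δ)) : Set ℝ :=
  {x | ∃ U ∈ S, x ∈ (U : Set ℝ)}

lemma geomRealization_mono {δ : ℝ} {S T : Set (CoverPoset δ)} (h : S ⊆ T) :
    geomRealization S ⊆ geomRealization T := by
  rintro x ⟨U, hU, hx⟩; exact ⟨U, h hU, hx⟩

/-- The mapper cosheaf of a space `X` with filter function `f : X → ℝ`, at
resolution `δ = 1`: over an open set `S` of the cover poset it returns the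
connected components of `f⁻¹(|S|)`. -/
def mapperCosheafOf (X : Type) [TopologicalSpace X] (f : X → ℝ) :
    MapperCosheaf (CoverPoset 1) where
  obj S := Pi0 (f ⁻¹' geomRealization S)
  map _ _ h := Pi0.map (Set.preimage_mono (geomRealization_mono h))
  map_id S a := by induction a using Quot.ind; rfl
  map_comp _ _ _ h₁ h₂ a := by induction a using Quot.ind; rfl

/-- The line space: the interval `[0, N]`, with filter function the height. -/
def lineSpace (N : ℤ) : Set ℝ := Set.Icc (0 : ℝ) (N : ℝ)

/-- The line mapper cosheaf: one connected component at every level. -/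
def lineMapper (N : ℤ) : MapperCosheaf (CoverPoset 1) :=
  mapperCosheafOf (lineSpace N) (fun x => (x : ℝ))

/-- The torus graph embedded in `ℝ²`: a vertical path from level `0` up to
level `a`, a loop spanning levels `a` to `a + h`, and a path up to level `N`;
the filter function is the second coordinate. -/
def torusSet (a : ℤ) (h : ℕ) (N : ℤ) : Set (ℝ × ℝ) :=
  ({0} : Set ℝ) ×ˢ (Set.Icc (0 : ℝ) (a : ℝ) ∪ Set.Icc ((a : ℝ) + (h : ℝ)) (N : ℝ)) ∪
  ({-1, 1} : Set ℝ) ×ˢ Set.Icc (a : ℝ) ((a : ℝ) + (h : ℝ)) ∪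
  Set.Icc (-1 : ℝ) 1 ×ˢ ({(a : ℝ), (a : ℝ) + (h : ℝ)} : Set ℝ)

/-- The torus mapper cosheaf `T_h` with loop of height `h` spanning levels
`a` to `a + h`. -/
def torusMapper (a : ℤ) (h : ℕ) (N : ℤ) : MapperCosheaf (CoverPoset 1) :=
  mapperCosheafOf (torusSet a h N) (fun p => (p : ℝ × ℝ).2)

section Aux
open Set

/-! ### Cover structure -/

lemma usig_eq (i : ℤ) : Usig 1 i = Set.Ioo ((i : ℝ) - 1) ((i : ℝ) + 1) := by
  unfold Usig; norm_num

lemma utau_eq (i : ℤ) : Utau 1 i = Set.Ioo ((i : ℝ)) ((i : ℝ) + 1) := by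
  unfold Utau; norm_num

lemma cover_structure {U : Set ℝ} (hU : U ∈ Cover 1) :
    ∃ c d : ℤ, U = Set.Ioo ((c : ℝ)) ((d : ℝ)) ∧ c < d ∧ d ≤ c + 2 := by
  rcases hU with ⟨i, rfl⟩ | ⟨i, rfl⟩
  · refine ⟨i - 1, i + 1, ?_, by omega, by omega⟩
    rw [usig_eq]; push_cast; ring_nf
  · refine ⟨i, i + 1, ?_, by omega, by omega⟩
    rw [utau_eq]; push_cast; ring_nf

lemma tau_le_sig_self (j : ℤ) : tauC 1 j ≤ sigC 1 j := by
  show (Utau 1 j : Set ℝ) ⊆ Usig 1 j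
  rw [utau_eq, usig_eq]
  apply Set.Ioo_subset_Ioo <;> push_cast <;> linarith

lemma tau_le_sig_succ (j : ℤ) : tauC 1 j ≤ sigC 1 (j + 1) := by
  show (Utau 1 j : Set ℝ) ⊆ Usig 1 (j + 1)
  rw [utau_eq, usig_eq]
  apply Set.Ioo_subset_Ioo <;> push_cast <;> linarith

/-! ### Combinatorial thickening lemmas -/

lemma tau_mem_downUp_left {S : Set (CoverPoset 1)} {j : ℤ} (hj : tauC 1 j ∈ S) :
    tauC 1 (j - 1) ∈ downSet (upSet S) := by
  refine ⟨sigC 1 j, ⟨tauC 1 j, hj, tau_le_sig_self j⟩, ?_⟩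
  have := tau_le_sig_succ (j - 1)
  simpa using this

lemma tau_mem_downUp_right {S : Set (CoverPoset 1)} {j : ℤ} (hj : tauC 1 j ∈ S) :
    tauC 1 (j + 1) ∈ downSet (upSet S) := by
  exact ⟨sigC 1 (j + 1), ⟨tauC 1 j, hj, tau_le_sig_succ j⟩, tau_le_sig_self (j + 1)⟩

lemma tau_mem_downUp_self {S : Set (CoverPoset 1)} {j : ℤ} (hj : tauC 1 j ∈ S) :
    tauC 1 j ∈ downSet (upSet S) := subset_downUp S hj

lemma sig_mem_downUp_of_self {S : Set (CoverPoset 1)} {j : ℤ} (hj : tauC 1 j ∈ S) :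
    sigC 1 j ∈ downSet (upSet S) :=
  ⟨sigC 1 j, ⟨tauC 1 j, hj, tau_le_sig_self j⟩, le_refl _⟩

lemma sig_mem_downUp_of_pred {S : Set (CoverPoset 1)} {j : ℤ} (hj : tauC 1 (j - 1) ∈ S) :
    sigC 1 j ∈ downSet (upSet S) := by
  refine ⟨sigC 1 j, ⟨tauC 1 (j - 1), hj, ?_⟩, le_refl _⟩
  have := tau_le_sig_succ (j - 1); simpa using this

lemma thicken_succ (S : Set (CoverPoset 1)) (k : ℕ) :
    thicken S (k + 1) = downSet (upSet (thicken S k)) := rfl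

lemma tau_mem_thicken {S : Set (CoverPoset 1)} {i : ℤ} (hi : tauC 1 i ∈ S) :
    ∀ k : ℕ, ∀ j : ℤ, i - k ≤ j → j ≤ i + k → tauC 1 j ∈ thicken S k := by
  intro k
  induction k with
  | zero =>
    intro j h1 h2
    have : j = i := by omega
    subst this; exact hi
  | succ k ih =>
    intro j h1 h2
    rw [thicken_succ]
    rcases lt_trichotomy j (i - k) with hlt | heq | hgt
    · have : j = i - k - 1 := by omega
      subst this
      have := ih (i - k) (by omega) (by omega)
      simpa using tau_mem_downUp_left this
    · exact subset_downUp _ (ih j (by omega) (by omega))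
    · rcases lt_trichotomy j (i + k + 1) with h3 | h3 | h3
      · exact subset_downUp _ (ih j (by omega) (by omega))
      · have := ih (i + k) (by omega) (by omega)
        have h4 := tau_mem_downUp_right this
        rw [show i + k + 1 = j from by omega] at h4
        exact h4
      · omega
  
lemma sig_mem_thicken {S : Set (CoverPoset 1)} {i : ℤ} (hi : tauC 1 i ∈ S) :
    ∀ k : ℕ, 1 ≤ k → ∀ j : ℤ, i - k + 1 ≤ j → j ≤ i + k → sigC 1 j ∈ thicken S k := by
  intro k hk j h1 h2
  obtain ⟨k', rfl⟩ : ∃ k', k = k' + 1 := ⟨k - 1, by omega⟩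
  rw [thicken_succ]
  rcases eq_or_lt_of_le h1 with heq | hlt
  · have : j = i - k' := by omega
    subst this
    exact sig_mem_downUp_of_self (tau_mem_thicken hi k' _ (by omega) (by omega))
  · exact sig_mem_downUp_of_pred (tau_mem_thicken hi k' (j - 1) (by omega) (by omega))

end Aux
section Aux2
open Set

lemma mem_geomRealization {δ : ℝ} {S : Set (CoverPoset δ)} {U : CoverPoset δ} (hU : U ∈ S)
    {x : ℝ} (hx : x ∈ (U : Set ℝ)) : x ∈ geomRealization S := ⟨U, hU, hx⟩

/-- C3: lower bound on the realization of the thickening. -/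
lemma realization_thicken_lower {S : Set (CoverPoset 1)} {i : ℤ} (hi : tauC 1 i ∈ S)
    (k : ℕ) : Set.Ioo ((i : ℝ) - k) ((i : ℝ) + 1 + k) ⊆ geomRealization (thicken S k) := by
  intro x hx
  obtain ⟨hx1, hx2⟩ := hx
  set j : ℤ := ⌊x⌋ with hj
  have hjx : (j : ℝ) ≤ x := Int.floor_le x
  have hxj : x < (j : ℝ) + 1 := Int.lt_floor_add_one x
  have hji : i - k ≤ j := by
    have h5 : ((i - k : ℤ) : ℝ) < ((j + 1 : ℤ) : ℝ) := by push_cast; linarith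
    have := (@Int.cast_lt ℝ _ _ _).mp h5
    omega
  have hij : j ≤ i + k := by
    have h5 : ((j : ℤ) : ℝ) < ((i + 1 + k : ℤ) : ℝ) := by push_cast; linarith
    have := (@Int.cast_lt ℝ _ _ _).mp h5
    omega
  rcases eq_or_lt_of_le hjx with heq | hlt
  · -- x is the integer j; use a sigma
    have hk : 1 ≤ k := by
      by_contra hk
      have : k = 0 := by omega
      subst this
      simp only [Nat.cast_zero, sub_zero] at hx1 hx2
      have h1 : ((i : ℤ) : ℝ) < ((j : ℤ) : ℝ) := by push_cast; linarith [heq]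
      have h2 : ((j : ℤ) : ℝ) < ((i + 1 : ℤ) : ℝ) := by push_cast; linarith [heq]
      have := (@Int.cast_lt ℝ _ _ _).mp h1
      have := (@Int.cast_lt ℝ _ _ _).mp h2
      omega
    have hji' : i - k + 1 ≤ j := by
      rcases eq_or_lt_of_le hji with heq2 | h; swap
      · omega
      · exfalso
        have : (i : ℝ) - k = (j : ℝ) := by rw [← heq2]; push_cast; ring
        rw [this] at hx1
        exact absurd heq (by linarith)
    refine mem_geomRealization (sig_mem_thicken hi k hk j hji' hij) ?_
    rw [show ((sigC 1 j : CoverPoset 1) : Set ℝ) = Usig 1 j from rfl, usig_eq]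
    constructor <;> [linarith [heq] ; linarith [heq]]
  · refine mem_geomRealization (tau_mem_thicken hi k j hji hij) ?_
    rw [show ((tauC 1 j : CoverPoset 1) : Set ℝ) = Utau 1 j from rfl, utau_eq]
    exact ⟨hlt, hxj⟩

/-- one step of the upper bound -/
lemma cover_grow {V W : CoverPoset 1} (hVW : (V : Set ℝ) ⊆ (W : Set ℝ)) {l r : ℤ}
    (hV : (V : Set ℝ) ⊆ Set.Ioo ((l : ℝ)) ((r : ℝ))) :
    (W : Set ℝ) ⊆ Set.Ioo ((l : ℝ) - 1) ((r : ℝ) + 1) := by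
  obtain ⟨c, d, hV1, hcd, _⟩ := cover_structure V.2
  obtain ⟨c', d', hW1, hcd', hd2'⟩ := cover_structure W.2
  rw [hV1, hW1] at hVW
  rw [hV1] at hV
  have hcast : (c : ℝ) < d := by exact_mod_cast hcd
  obtain ⟨h1, h2⟩ := (Set.Ioo_subset_Ioo_iff hcast).mp hVW
  obtain ⟨h3, h4⟩ := (Set.Ioo_subset_Ioo_iff hcast).mp hV
  have hc' : (c' : ℤ) ≤ c := by exact_mod_cast h1
  have hd : (d : ℤ) ≤ d' := by exact_mod_cast h2
  have hl : (l : ℤ) ≤ c := by exact_mod_cast h3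
  have hr : (d : ℤ) ≤ r := by exact_mod_cast h4
  rw [hW1]
  apply Set.Ioo_subset_Ioo
  · have h6 : l - 1 ≤ c' := by omega
    have := (@Int.cast_le ℝ _ _ _).mpr h6
    push_cast at this ⊢; linarith
  · have h6 : d' ≤ r + 1 := by omega
    have := (@Int.cast_le ℝ _ _ _).mpr h6
    push_cast at this ⊢; linarith

/-- C4: upper bound on elements of the thickening. -/
lemma thicken_elt_bound {S : Set (CoverPoset 1)} {l r : ℤ}
    (hS : ∀ U ∈ S, (U : Set ℝ) ⊆ Set.Ioo ((l : ℝ)) ((r : ℝ))) :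
    ∀ k : ℕ, ∀ U ∈ thicken S k, (U : Set ℝ) ⊆ Set.Ioo (((l - k : ℤ) : ℝ)) (((r + k : ℤ) : ℝ)) := by
  intro k
  induction k with
  | zero => intro U hU; simpa using hS U hU
  | succ k ih =>
    rintro U ⟨W, ⟨V, hV, hVW⟩, hUW⟩
    have hV' := ih V hV
    have hW := cover_grow (hVW : (V : Set ℝ) ⊆ W) hV'
    refine Set.Subset.trans (hUW : (U : Set ℝ) ⊆ W) (hW.trans ?_)
    apply Set.Ioo_subset_Ioo <;> push_cast <;> linarith

lemma realization_thicken_upper {S : Set (CoverPoset 1)} {l r : ℤ}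
    (hS : ∀ U ∈ S, (U : Set ℝ) ⊆ Set.Ioo ((l : ℝ)) ((r : ℝ))) (k : ℕ) :
    geomRealization (thicken S k) ⊆ Set.Ioo ((l : ℝ) - k) ((r : ℝ) + k) := by
  rintro x ⟨U, hU, hx⟩
  have := thicken_elt_bound hS k U hU hx
  obtain ⟨h1, h2⟩ := this
  push_cast at h1 h2
  exact ⟨by linarith, by linarith⟩

/-- C5: in a down-closed set, every realization point lies in some tau interval `[j, j+1)`. -/
lemma exists_tau_of_mem {S : Set (CoverPoset 1)} (hS : downSet S = S) {x : ℝ}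
    (hx : x ∈ geomRealization S) :
    ∃ j : ℤ, tauC 1 j ∈ S ∧ (j : ℝ) ≤ x ∧ x < (j : ℝ) + 1 := by
  obtain ⟨U, hU, hxU⟩ := hx
  have hU2 := U.2
  rcases hU2 with ⟨i, hi⟩ | ⟨i, hi⟩
  · -- sigma
    have hUeq : U = sigC 1 i := Subtype.ext hi.symm
    subst hUeq
    rw [show ((sigC 1 i : CoverPoset 1) : Set ℝ) = Usig 1 i from rfl, usig_eq] at hxU
    obtain ⟨hx1, hx2⟩ := hxU
    rcases lt_or_ge x (i : ℝ) with hxi | hxi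
    · refine ⟨i - 1, ?_, by push_cast; linarith, by push_cast; linarith⟩
      rw [← hS]
      refine ⟨sigC 1 i, hU, ?_⟩
      have := tau_le_sig_succ (i - 1); simpa using this
    · exact ⟨i, by rw [← hS]; exact ⟨sigC 1 i, hU, tau_le_sig_self i⟩, hxi, by push_cast; linarith⟩
  · have hUeq : U = tauC 1 i := Subtype.ext hi.symm
    subst hUeq
    rw [show ((tauC 1 i : CoverPoset 1) : Set ℝ) = Utau 1 i from rfl, utau_eq] at hxU
    exact ⟨i, hU, le_of_lt hxU.1, hxU.2⟩

end Aux2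
section Aux3
open Set

/-! ### Pi0 helpers -/

lemma pi0_sound {X : Type*} [TopologicalSpace X] {A : Set X} {x y : ↥A}
    (hxy : (y : X) ∈ connectedComponentIn A (x : X)) :
    (Quot.mk _ x : Pi0 A) = Quot.mk _ y := Quot.sound hxy

lemma pi0_exact {X : Type*} [TopologicalSpace X] {A : Set X} {x y : ↥A}
    (hxy : (Quot.mk _ x : Pi0 A) = Quot.mk _ y) :
    (y : X) ∈ connectedComponentIn A (x : X) := by
  have h2 := Quot.eq.mp hxy
  clear hxy
  induction h2 with
  | rel u v hr => exact hr
  | refl u => exact mem_connectedComponentIn u.2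
  | symm u v _ ih =>
    rw [← connectedComponentIn_eq ih]
    exact mem_connectedComponentIn u.2
  | trans u v w _ _ ih1 ih2 =>
    rw [connectedComponentIn_eq ih1]
    exact ih2

lemma pi0_subsingleton {X : Type*} [TopologicalSpace X] {A : Set X}
    (hA : IsPreconnected A) (u v : Pi0 A) : u = v := by
  induction u using Quot.ind with | _ x =>
  induction v using Quot.ind with | _ y =>
  exact pi0_sound (hA.subset_connectedComponentIn x.2 Set.Subset.rfl y.2)

lemma preconn_preimage_val {X : Type*} [TopologicalSpace X] {Y : Set X} {K : Set X}
    (hKY : K ⊆ Y) (hK : IsPreconnected K) :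
    IsPreconnected ((Subtype.val : Y → X) ⁻¹' K) := by
  apply Topology.IsInducing.subtypeVal.isPreconnected_image.mp
  rwa [Subtype.image_preimage_coe, Set.inter_eq_self_of_subset_right hKY]

/-! ### The canonical section q of the torus height -/

noncomputable def chiF (a : ℤ) (h : ℕ) (t : ℝ) : ℝ :=
  if (a : ℝ) ≤ t ∧ t ≤ (a : ℝ) + (h : ℝ) then -1 else 0

noncomputable def qpt (a : ℤ) (h : ℕ) (t : ℝ) : ℝ × ℝ := (chiF a h t, t)

lemma qpt_snd (a : ℤ) (h : ℕ) (t : ℝ) : (qpt a h t).2 = t := rfl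

lemma chiF_of_mem {a : ℤ} {h : ℕ} {t : ℝ} (h1 : (a : ℝ) ≤ t) (h2 : t ≤ (a : ℝ) + h) :
    chiF a h t = -1 := if_pos ⟨h1, h2⟩

lemma chiF_of_lt {a : ℤ} {h : ℕ} {t : ℝ} (h1 : t < (a : ℝ)) : chiF a h t = 0 :=
  if_neg (by push_neg; intro h2; linarith)

lemma chiF_of_gt {a : ℤ} {h : ℕ} {t : ℝ} (h1 : (a : ℝ) + h < t) : chiF a h t = 0 :=
  if_neg (by push_neg; intro h2; linarith)

lemma qpt_mem_torus {a N : ℤ} {h : ℕ} {t : ℝ} (h0 : 0 ≤ t) (hN : t ≤ (N : ℝ)) :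
    qpt a h t ∈ torusSet a h N := by
  unfold qpt chiF
  by_cases hc : (a : ℝ) ≤ t ∧ t ≤ (a : ℝ) + h
  · rw [if_pos hc]
    exact Or.inl (Or.inr ⟨by simp, hc.1, hc.2⟩)
  · rw [if_neg hc]
    push_neg at hc
    rcases lt_or_ge t (a : ℝ) with h1 | h1
    · exact Or.inl (Or.inl ⟨rfl, Or.inl ⟨h0, le_of_lt h1⟩⟩)
    · exact Or.inl (Or.inl ⟨rfl, Or.inr ⟨le_of_lt (hc h1), hN⟩⟩)

/-! ### Torus membership facts -/

lemma torus_snd_bounds {a N : ℤ} {h : ℕ} (ha : 0 < a) (hN : a + (h : ℤ) < N)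
    {p : ℝ × ℝ} (hp : p ∈ torusSet a h N) : 0 ≤ p.2 ∧ p.2 ≤ (N : ℝ) := by
  have haR : (0 : ℝ) < a := by exact_mod_cast ha
  have hNR : (a : ℝ) + h < N := by exact_mod_cast hN
  have hnn : (0:ℝ) ≤ h := Nat.cast_nonneg h
  rcases hp with (⟨_, h2⟩ | ⟨_, h2⟩) | ⟨_, h2⟩
  · rcases h2 with ⟨h3, h4⟩ | ⟨h3, h4⟩
    · exact ⟨h3, by linarith⟩
    · exact ⟨by linarith, h4⟩
  · obtain ⟨h3, h4⟩ := h2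
    constructor <;> [linarith ; linarith]
  · simp only [Set.mem_insert_iff, Set.mem_singleton_iff] at h2
    rcases h2 with h3 | h3 <;> rw [h3] <;> exact ⟨by linarith, by linarith⟩

lemma torus_fst_cap {a N : ℤ} {h : ℕ} {p : ℝ × ℝ} (hp : p ∈ torusSet a h N)
    (hpa : p.2 = (a : ℝ) ∨ p.2 = (a : ℝ) + h) : p.1 ∈ Set.Icc (-1 : ℝ) 1 := by
  rcases hp with (⟨h1, _⟩ | ⟨h1, _⟩) | ⟨h1, _⟩
  · rw [Set.mem_singleton_iff] at h1; rw [h1]; constructor <;> norm_num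
  · simp only [Set.mem_insert_iff, Set.mem_singleton_iff] at h1
    rcases h1 with h1 | h1 <;> rw [h1] <;> constructor <;> norm_num
  · exact h1

lemma torus_fst_stem {a N : ℤ} {h : ℕ} {p : ℝ × ℝ} (hp : p ∈ torusSet a h N)
    (hlo : p.2 < (a : ℝ) ∨ (a : ℝ) + h < p.2) : p.1 = 0 := by
  rcases hp with (⟨h1, _⟩ | ⟨h1, h2⟩) | ⟨h1, h2⟩
  · exact h1
  · exfalso; obtain ⟨h3, h4⟩ := h2; rcases hlo with h5 | h5 <;> linarith
  · exfalso
    have hnn : (0:ℝ) ≤ h := Nat.cast_nonneg h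
    simp only [Set.mem_insert_iff, Set.mem_singleton_iff] at h2
    rcases h2 with h3 | h3 <;> rcases hlo with h5 | h5 <;> rw [h3] at h5 <;> linarith

lemma torus_fst_loop {a N : ℤ} {h : ℕ} {p : ℝ × ℝ} (hp : p ∈ torusSet a h N)
    (hlo : (a : ℝ) < p.2) (hhi : p.2 < (a : ℝ) + h) : p.1 = -1 ∨ p.1 = 1 := by
  rcases hp with (⟨h1, h2⟩ | ⟨h1, _⟩) | ⟨_, h2⟩
  · exfalso
    rcases h2 with ⟨_, h4⟩ | ⟨h3, _⟩ <;> linarith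
  · simpa using h1
  · exfalso
    simp only [Set.mem_insert_iff, Set.mem_singleton_iff] at h2
    rcases h2 with h3 | h3 <;> rw [h3] at hlo hhi <;> linarith

end Aux3
section Aux4
open Set

/-- vertical segment at first coordinate `c` -/
lemma preconn_vseg (c t₁ t₂ : ℝ) : IsPreconnected (({c} : Set ℝ) ×ˢ Set.Icc t₁ t₂) :=
  isPreconnected_singleton.prod isPreconnected_Icc

lemma preconn_hseg (c₁ c₂ t : ℝ) : IsPreconnected (Set.Icc c₁ c₂ ×ˢ ({t} : Set ℝ)) :=
  isPreconnected_Icc.prod isPreconnected_singleton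

/-- CONN: a connected subset of the torus joining `qpt x` to `qpt y`,
with heights within `[x, y]`. -/
lemma conn_q {a N : ℤ} {h : ℕ} (ha : 0 < a) (hN : a + (h : ℤ) < N)
    {x y : ℝ} (hxy : x ≤ y) (h0 : 0 ≤ x) (hyN : y ≤ (N : ℝ)) :
    ∃ K : Set (ℝ × ℝ), IsPreconnected K ∧ K ⊆ torusSet a h N ∧
      (∀ z ∈ K, z.2 ∈ Set.Icc x y) ∧ qpt a h x ∈ K ∧ qpt a h y ∈ K := by
  have haR : (0 : ℝ) < a := by exact_mod_cast ha
  have hNR : (a : ℝ) + h < N := by exact_mod_cast hN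
  have hnn : (0 : ℝ) ≤ h := Nat.cast_nonneg h
  set A := (a : ℝ)
  set H := (a : ℝ) + h with hH
  by_cases hyA : y < A
  · -- case (i): both on lower stem
    refine ⟨({0} : Set ℝ) ×ˢ Set.Icc x y, preconn_vseg _ _ _, ?_, ?_, ?_, ?_⟩
    · rintro ⟨c, t⟩ ⟨hc, ht⟩
      exact Or.inl (Or.inl ⟨hc, Or.inl ⟨by exact le_trans h0 ht.1, by linarith [ht.2]⟩⟩)
    · rintro ⟨c, t⟩ ⟨_, ht⟩; exact ht
    · exact ⟨by rw [Set.mem_singleton_iff]; exact chiF_of_lt (by linarith), ⟨le_refl x, hxy⟩⟩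
    · exact ⟨by rw [Set.mem_singleton_iff]; exact chiF_of_lt hyA, ⟨hxy, le_refl y⟩⟩
  by_cases hHx : H < x
  · -- case (ii): both on upper stem
    refine ⟨({0} : Set ℝ) ×ˢ Set.Icc x y, preconn_vseg _ _ _, ?_, ?_, ?_, ?_⟩
    · rintro ⟨c, t⟩ ⟨hc, ht⟩
      exact Or.inl (Or.inl ⟨hc, Or.inr ⟨by linarith [ht.1], le_trans ht.2 hyN⟩⟩)
    · rintro ⟨c, t⟩ ⟨_, ht⟩; exact ht
    · exact ⟨by rw [Set.mem_singleton_iff]; exact chiF_of_gt hHx, ⟨le_refl x, hxy⟩⟩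
    · exact ⟨by rw [Set.mem_singleton_iff]; exact chiF_of_gt (by linarith), ⟨hxy, le_refl y⟩⟩
  push_neg at hyA hHx
  -- now A ≤ y and x ≤ H
  by_cases hxA : x < A
  · by_cases hyH : y ≤ H
    · -- case (iv)
      refine ⟨({0} : Set ℝ) ×ˢ Set.Icc x A ∪
          (Set.Icc (-1 : ℝ) 0 ×ˢ ({A} : Set ℝ) ∪ ({-1} : Set ℝ) ×ˢ Set.Icc A y),
          ?_, ?_, ?_, ?_, ?_⟩
      · apply IsPreconnected.union (0, A)
        · exact ⟨rfl, ⟨le_of_lt hxA, le_refl A⟩⟩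
        · exact Or.inl ⟨⟨by norm_num, le_refl 0⟩, rfl⟩
        · exact preconn_vseg _ _ _
        · apply IsPreconnected.union (-1, A)
          · exact ⟨⟨le_refl _, by norm_num⟩, rfl⟩
          · exact ⟨rfl, ⟨le_refl A, hyA⟩⟩
          · exact preconn_hseg _ _ _
          · exact preconn_vseg _ _ _
      · rintro ⟨c, t⟩ (⟨hc, ht⟩ | ⟨hc, ht⟩ | ⟨hc, ht⟩)
        · exact Or.inl (Or.inl ⟨hc, Or.inl ⟨le_trans h0 ht.1, ht.2⟩⟩)
        · rw [Set.mem_singleton_iff] at ht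
          exact Or.inr ⟨⟨hc.1, le_trans hc.2 (by norm_num)⟩, by rw [ht]; exact Or.inl rfl⟩
        · rw [Set.mem_singleton_iff] at hc
          exact Or.inl (Or.inr ⟨by rw [hc]; exact Or.inl rfl, ht.1, le_trans ht.2 hyH⟩)
      · rintro ⟨c, t⟩ (⟨_, ht⟩ | ⟨_, ht⟩ | ⟨_, ht⟩)
        · exact ⟨ht.1, le_trans ht.2 hyA⟩
        · rw [Set.mem_singleton_iff] at ht; rw [ht]; exact ⟨le_of_lt hxA, hyA⟩
        · exact ⟨le_trans (le_of_lt hxA) ht.1, ht.2⟩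
      · exact Or.inl ⟨by rw [Set.mem_singleton_iff]; exact chiF_of_lt hxA, le_refl x, le_of_lt hxA⟩
      · exact Or.inr (Or.inr ⟨by rw [Set.mem_singleton_iff]; exact chiF_of_mem hyA hyH, hyA, le_refl y⟩)
    · -- case (vi): x < A, H < y
      push_neg at hyH
      refine ⟨({0} : Set ℝ) ×ˢ Set.Icc x A ∪
          (Set.Icc (-1 : ℝ) 0 ×ˢ ({A} : Set ℝ) ∪
          (({-1} : Set ℝ) ×ˢ Set.Icc A H ∪
          (Set.Icc (-1 : ℝ) 0 ×ˢ ({H} : Set ℝ) ∪ ({0} : Set ℝ) ×ˢ Set.Icc H y))),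
          ?_, ?_, ?_, ?_, ?_⟩
      · apply IsPreconnected.union (0, A)
        · exact ⟨rfl, ⟨le_of_lt hxA, le_refl A⟩⟩
        · exact Or.inl ⟨⟨by norm_num, le_refl 0⟩, rfl⟩
        · exact preconn_vseg _ _ _
        · apply IsPreconnected.union (-1, A)
          · exact ⟨⟨le_refl _, by norm_num⟩, rfl⟩
          · exact Or.inl ⟨rfl, ⟨le_refl A, by linarith⟩⟩
          · exact preconn_hseg _ _ _
          · apply IsPreconnected.union (-1, H)
            · exact ⟨rfl, ⟨by linarith, le_refl H⟩⟩
            · exact Or.inl ⟨⟨le_refl _, by norm_num⟩, rfl⟩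
            · exact preconn_vseg _ _ _
            · apply IsPreconnected.union (0, H)
              · exact ⟨⟨by norm_num, le_refl 0⟩, rfl⟩
              · exact ⟨rfl, ⟨le_refl H, le_of_lt hyH⟩⟩
              · exact preconn_hseg _ _ _
              · exact preconn_vseg _ _ _
      · rintro ⟨c, t⟩ (⟨hc, ht⟩ | ⟨hc, ht⟩ | ⟨hc, ht⟩ | ⟨hc, ht⟩ | ⟨hc, ht⟩)
        · exact Or.inl (Or.inl ⟨hc, Or.inl ⟨le_trans h0 ht.1, ht.2⟩⟩)
        · rw [Set.mem_singleton_iff] at ht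
          exact Or.inr ⟨⟨hc.1, le_trans hc.2 (by norm_num)⟩, by rw [ht]; exact Or.inl rfl⟩
        · rw [Set.mem_singleton_iff] at hc
          exact Or.inl (Or.inr ⟨by rw [hc]; exact Or.inl rfl, ht⟩)
        · rw [Set.mem_singleton_iff] at ht
          exact Or.inr ⟨⟨hc.1, le_trans hc.2 (by norm_num)⟩, by rw [ht]; exact Or.inr rfl⟩
        · exact Or.inl (Or.inl ⟨hc, Or.inr ⟨ht.1, le_trans ht.2 hyN⟩⟩)
      · rintro ⟨c, t⟩ (⟨_, ht⟩ | ⟨_, ht⟩ | ⟨_, ht⟩ | ⟨_, ht⟩ | ⟨_, ht⟩)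
        · exact ⟨ht.1, by linarith [ht.2]⟩
        · rw [Set.mem_singleton_iff] at ht; rw [ht]; exact ⟨le_of_lt hxA, by linarith⟩
        · exact ⟨by linarith [ht.1], by linarith [ht.2]⟩
        · rw [Set.mem_singleton_iff] at ht; rw [ht]; exact ⟨by linarith, le_of_lt hyH⟩
        · exact ⟨by linarith [ht.1], ht.2⟩
      · exact Or.inl ⟨by rw [Set.mem_singleton_iff]; exact chiF_of_lt hxA, le_refl x, le_of_lt hxA⟩
      · refine Or.inr (Or.inr (Or.inr (Or.inr ⟨?_, le_of_lt hyH, le_refl y⟩)))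
        rw [Set.mem_singleton_iff]; exact chiF_of_gt hyH
  · push_neg at hxA
    by_cases hyH : y ≤ H
    · -- case (iii): both on loop
      refine ⟨({-1} : Set ℝ) ×ˢ Set.Icc x y, preconn_vseg _ _ _, ?_, ?_, ?_, ?_⟩
      · rintro ⟨c, t⟩ ⟨hc, ht⟩
        rw [Set.mem_singleton_iff] at hc
        exact Or.inl (Or.inr ⟨by rw [hc]; exact Or.inl rfl, le_trans hxA ht.1, le_trans ht.2 hyH⟩)
      · rintro ⟨c, t⟩ ⟨_, ht⟩; exact ht
      · exact ⟨by rw [Set.mem_singleton_iff]; exact chiF_of_mem hxA (le_trans hxy hyH), le_refl x, hxy⟩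
      · exact ⟨by rw [Set.mem_singleton_iff]; exact chiF_of_mem (le_trans hxA hxy) hyH, hxy, le_refl y⟩
    · -- case (v): A ≤ x ≤ H < y
      push_neg at hyH
      refine ⟨({-1} : Set ℝ) ×ˢ Set.Icc x H ∪
          (Set.Icc (-1 : ℝ) 0 ×ˢ ({H} : Set ℝ) ∪ ({0} : Set ℝ) ×ˢ Set.Icc H y),
          ?_, ?_, ?_, ?_, ?_⟩
      · apply IsPreconnected.union (-1, H)
        · exact ⟨rfl, ⟨hHx, le_refl H⟩⟩
        · exact Or.inl ⟨⟨le_refl _, by norm_num⟩, rfl⟩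
        · exact preconn_vseg _ _ _
        · apply IsPreconnected.union (0, H)
          · exact ⟨⟨by norm_num, le_refl 0⟩, rfl⟩
          · exact ⟨rfl, ⟨le_refl H, le_of_lt hyH⟩⟩
          · exact preconn_hseg _ _ _
          · exact preconn_vseg _ _ _
      · rintro ⟨c, t⟩ (⟨hc, ht⟩ | ⟨hc, ht⟩ | ⟨hc, ht⟩)
        · rw [Set.mem_singleton_iff] at hc
          exact Or.inl (Or.inr ⟨by rw [hc]; exact Or.inl rfl, le_trans hxA ht.1, ht.2⟩)
        · rw [Set.mem_singleton_iff] at ht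
          exact Or.inr ⟨⟨hc.1, le_trans hc.2 (by norm_num)⟩, by rw [ht]; exact Or.inr rfl⟩
        · exact Or.inl (Or.inl ⟨hc, Or.inr ⟨ht.1, le_trans ht.2 hyN⟩⟩)
      · rintro ⟨c, t⟩ (⟨_, ht⟩ | ⟨_, ht⟩ | ⟨_, ht⟩)
        · exact ⟨ht.1, by linarith [ht.2]⟩
        · rw [Set.mem_singleton_iff] at ht; rw [ht]; exact ⟨hHx, le_of_lt hyH⟩
        · exact ⟨le_trans hHx ht.1, ht.2⟩
      · exact Or.inl ⟨by rw [Set.mem_singleton_iff]; exact chiF_of_mem hxA hHx, le_refl x, hHx⟩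
      · refine Or.inr (Or.inr ⟨?_, le_of_lt hyH, le_refl y⟩)
        rw [Set.mem_singleton_iff]; exact chiF_of_gt hyH

end Aux4
section Aux5
open Set

lemma chiF_mem_Icc (a : ℤ) (h : ℕ) (t : ℝ) : chiF a h t ∈ Set.Icc (-1 : ℝ) 1 := by
  unfold chiF; split_ifs <;> norm_num

/-- KEY: `p` and `qpt p.2` lie in a common connected subset of the torus over the
`2n`-thickening, provided `h ≤ 4n`. -/
lemma key_conn {a N : ℤ} {h : ℕ} (ha : 0 < a) (hh : 0 < h) (hN : a + (h : ℤ) < N)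
    {n : ℕ} (h4 : h ≤ 4 * n) {S : Set (CoverPoset 1)} (hS : downSet S = S)
    {p : ℝ × ℝ} (hp : p ∈ torusSet a h N) (hpV : p.2 ∈ geomRealization S) :
    ∃ K : Set (ℝ × ℝ), IsPreconnected K ∧ K ⊆ torusSet a h N ∧
      (∀ z ∈ K, z.2 ∈ geomRealization (thicken S (n + n))) ∧ p ∈ K ∧ qpt a h p.2 ∈ K := by
  have haR : (0 : ℝ) < a := by exact_mod_cast ha
  have hNR : (a : ℝ) + h < N := by exact_mod_cast hN
  have hnn : (0 : ℝ) < h := by exact_mod_cast hh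
  have hn : 0 < n := by omega
  set x := p.2 with hx
  obtain ⟨j, hjS, hjx, hxj⟩ := exists_tau_of_mem hS hpV
  have hreal := realization_thicken_lower hjS (n + n)
  have hmono : x ∈ geomRealization (thicken S (n + n)) :=
    geomRealization_mono (self_subset_thicken S (n + n)) hpV
  by_cases hcapA : x = (a : ℝ) ∨ x = (a : ℝ) + h
  · -- Case A: at a cap level
    refine ⟨Set.Icc (-1 : ℝ) 1 ×ˢ ({x} : Set ℝ), preconn_hseg _ _ _, ?_, ?_, ?_, ?_⟩
    · rintro ⟨c, t⟩ ⟨hc, ht⟩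
      rw [Set.mem_singleton_iff] at ht
      refine Or.inr ⟨hc, ?_⟩
      rw [ht]
      rcases hcapA with hc1 | hc1 <;> rw [hc1] <;> [exact Or.inl rfl ; exact Or.inr rfl]
    · rintro ⟨c, t⟩ ⟨_, ht⟩
      rw [Set.mem_singleton_iff] at ht; rw [ht]; exact hmono
    · exact ⟨torus_fst_cap hp hcapA, rfl⟩
    · exact ⟨chiF_mem_Icc a h x, rfl⟩
  push_neg at hcapA
  obtain ⟨hne1, hne2⟩ := hcapA
  by_cases hlo : x < (a : ℝ)
  · -- Case B: lower stem, p = qpt x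
    have hp0 : p.1 = 0 := torus_fst_stem hp (Or.inl hlo)
    have : qpt a h x = p := by
      unfold qpt; rw [chiF_of_lt hlo, ← hp0]
    refine ⟨{p}, isPreconnected_singleton, by simpa using hp, ?_, rfl, by rw [this]; exact rfl⟩
    rintro z hz; rw [Set.mem_singleton_iff] at hz; rw [hz]; exact hmono
  by_cases hhi : (a : ℝ) + h < x
  · have hp0 : p.1 = 0 := torus_fst_stem hp (Or.inr hhi)
    have : qpt a h x = p := by
      unfold qpt; rw [chiF_of_gt hhi, ← hp0]
    refine ⟨{p}, isPreconnected_singleton, by simpa using hp, ?_, rfl, by rw [this]; exact rfl⟩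
    rintro z hz; rw [Set.mem_singleton_iff] at hz; rw [hz]; exact hmono
  push_neg at hlo hhi
  have hlo' : (a : ℝ) < x := lt_of_le_of_ne hlo (Ne.symm hne1)
  have hhi' : x < (a : ℝ) + h := lt_of_le_of_ne hhi hne2
  rcases torus_fst_loop hp hlo' hhi' with hp1 | hp1
  · -- left branch: p = qpt x
    have : qpt a h x = p := by
      unfold qpt; rw [chiF_of_mem hlo hhi, ← hp1]
    refine ⟨{p}, isPreconnected_singleton, by simpa using hp, ?_, rfl, by rw [this]; exact rfl⟩
    rintro z hz; rw [Set.mem_singleton_iff] at hz; rw [hz]; exact hmono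
  · -- right branch: connect over a cap
    have haj : a ≤ j := by
      have : ((a : ℤ) : ℝ) < ((j + 1 : ℤ) : ℝ) := by push_cast; linarith
      have := (@Int.cast_lt ℝ _ _ _).mp this; omega
    have hja : j + 1 ≤ a + h := by
      have : ((j : ℤ) : ℝ) < ((a + h : ℤ) : ℝ) := by push_cast; linarith
      have := (@Int.cast_lt ℝ _ _ _).mp this; omega
    have hqx : chiF a h x = -1 := chiF_of_mem hlo hhi
    by_cases hcap : j - (n + n : ℕ) < a
    · -- use lower cap at level a
      have hAin : (j : ℝ) - (n + n : ℕ) < (a : ℝ) := by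
        have := (@Int.cast_lt ℝ _ _ _).mpr hcap; push_cast at this ⊢; linarith
      refine ⟨({1} : Set ℝ) ×ˢ Set.Icc ((a : ℝ)) x ∪
          (Set.Icc (-1 : ℝ) 1 ×ˢ ({(a : ℝ)} : Set ℝ) ∪ ({-1} : Set ℝ) ×ˢ Set.Icc ((a : ℝ)) x),
          ?_, ?_, ?_, ?_, ?_⟩
      · apply IsPreconnected.union (1, (a : ℝ))
        · exact ⟨rfl, ⟨le_refl _, hlo⟩⟩
        · exact Or.inl ⟨⟨by norm_num, le_refl 1⟩, rfl⟩
        · exact preconn_vseg _ _ _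
        · apply IsPreconnected.union (-1, (a : ℝ))
          · exact ⟨⟨le_refl _, by norm_num⟩, rfl⟩
          · exact ⟨rfl, ⟨le_refl _, hlo⟩⟩
          · exact preconn_hseg _ _ _
          · exact preconn_vseg _ _ _
      · rintro ⟨c, t⟩ (⟨hc, ht⟩ | ⟨hc, ht⟩ | ⟨hc, ht⟩)
        · rw [Set.mem_singleton_iff] at hc
          exact Or.inl (Or.inr ⟨by rw [hc]; exact Or.inr rfl, ht.1, by linarith [ht.2]⟩)
        · rw [Set.mem_singleton_iff] at ht
          exact Or.inr ⟨hc, by rw [ht]; exact Or.inl rfl⟩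
        · rw [Set.mem_singleton_iff] at hc
          exact Or.inl (Or.inr ⟨by rw [hc]; exact Or.inl rfl, ht.1, by linarith [ht.2]⟩)
      · have hsub : Set.Icc ((a : ℝ)) x ⊆ Set.Ioo ((j : ℝ) - (n + n : ℕ)) ((j : ℝ) + 1 + (n + n : ℕ)) := by
          rintro t ⟨ht1, ht2⟩
          constructor
          · linarith
          · have : (0 : ℝ) ≤ (n + n : ℕ) := Nat.cast_nonneg _
            linarith
        rintro ⟨c, t⟩ (⟨_, ht⟩ | ⟨_, ht⟩ | ⟨_, ht⟩)
        · exact hreal (hsub ht)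
        · rw [Set.mem_singleton_iff] at ht
          refine hreal ?_
          rw [ht]
          refine ⟨hAin, ?_⟩
          have h5 : ((a : ℤ) : ℝ) ≤ ((j : ℤ) : ℝ) := (@Int.cast_le ℝ _ _ _).mpr haj
          have : (0 : ℝ) ≤ (n + n : ℕ) := Nat.cast_nonneg _
          linarith
        · exact hreal (hsub ht)
      · exact Or.inl ⟨by rw [Set.mem_singleton_iff]; exact hp1, hlo, le_refl x⟩
      · exact Or.inr (Or.inr ⟨by rw [Set.mem_singleton_iff]; exact hqx, hlo, le_refl x⟩)
    · -- use upper cap at level a + h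
      push_neg at hcap
      have hcap2 : (a : ℤ) + h < j + 1 + (n + n : ℕ) := by omega
      have hHin : (a : ℝ) + h < (j : ℝ) + 1 + (n + n : ℕ) := by
        have := (@Int.cast_lt ℝ _ _ _).mpr hcap2; push_cast at this ⊢; linarith
      refine ⟨({1} : Set ℝ) ×ˢ Set.Icc x ((a : ℝ) + h) ∪
          (Set.Icc (-1 : ℝ) 1 ×ˢ ({(a : ℝ) + h} : Set ℝ) ∪ ({-1} : Set ℝ) ×ˢ Set.Icc x ((a : ℝ) + h)),
          ?_, ?_, ?_, ?_, ?_⟩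
      · apply IsPreconnected.union (1, (a : ℝ) + h)
        · exact ⟨rfl, ⟨hhi, le_refl _⟩⟩
        · exact Or.inl ⟨⟨by norm_num, le_refl 1⟩, rfl⟩
        · exact preconn_vseg _ _ _
        · apply IsPreconnected.union (-1, (a : ℝ) + h)
          · exact ⟨⟨le_refl _, by norm_num⟩, rfl⟩
          · exact ⟨rfl, ⟨hhi, le_refl _⟩⟩
          · exact preconn_hseg _ _ _
          · exact preconn_vseg _ _ _
      · rintro ⟨c, t⟩ (⟨hc, ht⟩ | ⟨hc, ht⟩ | ⟨hc, ht⟩)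
        · rw [Set.mem_singleton_iff] at hc
          exact Or.inl (Or.inr ⟨by rw [hc]; exact Or.inr rfl, by linarith [ht.1], ht.2⟩)
        · rw [Set.mem_singleton_iff] at ht
          exact Or.inr ⟨hc, by rw [ht]; exact Or.inr rfl⟩
        · rw [Set.mem_singleton_iff] at hc
          exact Or.inl (Or.inr ⟨by rw [hc]; exact Or.inl rfl, by linarith [ht.1], ht.2⟩)
      · have hjm : (j : ℝ) - (n + n : ℕ) < x := by
          have : (1 : ℝ) ≤ (n + n : ℕ) := by exact_mod_cast Nat.one_le_iff_ne_zero.mpr (by omega)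
          linarith
        have hsub : Set.Icc x ((a : ℝ) + h) ⊆
            Set.Ioo ((j : ℝ) - (n + n : ℕ)) ((j : ℝ) + 1 + (n + n : ℕ)) := by
          rintro t ⟨ht1, ht2⟩
          exact ⟨by linarith, by linarith⟩
        rintro ⟨c, t⟩ (⟨_, ht⟩ | ⟨_, ht⟩ | ⟨_, ht⟩)
        · exact hreal (hsub ht)
        · rw [Set.mem_singleton_iff] at ht
          refine hreal ?_
          rw [ht]
          exact ⟨by linarith, hHin⟩
        · exact hreal (hsub ht)
      · exact Or.inl ⟨by rw [Set.mem_singleton_iff]; exact hp1, le_refl x, hhi⟩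
      · exact Or.inr (Or.inr ⟨by rw [Set.mem_singleton_iff]; exact hqx, le_refl x, hhi⟩)

end Aux5
section Aux6
open Set

def lineObj (N : ℤ) (S : Set (CoverPoset 1)) : Set ↥(lineSpace N) :=
  (fun x : ↥(lineSpace N) => (x : ℝ)) ⁻¹' geomRealization S

def torObj (a : ℤ) (h : ℕ) (N : ℤ) (S : Set (CoverPoset 1)) : Set ↥(torusSet a h N) :=
  (fun p : ↥(torusSet a h N) => (p : ℝ × ℝ).2) ⁻¹' geomRealization S

lemma lineObj_eq (N : ℤ) (S : Set (CoverPoset 1)) :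
    (lineMapper N).obj S = Pi0 (lineObj N S) := rfl

lemma torObj_eq (a : ℤ) (h : ℕ) (N : ℤ) (S : Set (CoverPoset 1)) :
    (torusMapper a h N).obj S = Pi0 (torObj a h N S) := rfl

/-- soundness core for Phi, ordered version -/
lemma phi_sound_aux {a N : ℤ} {h : ℕ} (ha : 0 < a) (hN : a + (h : ℤ) < N)
    (n : ℕ) (S : Set (CoverPoset 1)) {x y : ℝ} (hxy : x ≤ y) (h0 : 0 ≤ x) (hyN : y ≤ (N : ℝ))
    (hIcc : Set.Icc x y ⊆ geomRealization S)
    (hx1 : qpt a h x ∈ torusSet a h N) (hy1 : qpt a h y ∈ torusSet a h N)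
    (hx2 : (qpt a h x).2 ∈ geomRealization (thicken S n))
    (hy2 : (qpt a h y).2 ∈ geomRealization (thicken S n)) :
    (Quot.mk _ (⟨⟨qpt a h x, hx1⟩, hx2⟩ : ↥(torObj a h N (thicken S n))) :
        Pi0 (torObj a h N (thicken S n))) = Quot.mk _ ⟨⟨qpt a h y, hy1⟩, hy2⟩ := by
  obtain ⟨K, hK, hKT, hKh, hKx, hKy⟩ := conn_q ha hN hxy h0 hyN
  apply pi0_sound
  have hpre : IsPreconnected ((Subtype.val : ↥(torusSet a h N) → ℝ × ℝ) ⁻¹' K) :=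
    preconn_preimage_val hKT hK
  have hsub : (Subtype.val : ↥(torusSet a h N) → ℝ × ℝ) ⁻¹' K ⊆ torObj a h N (thicken S n) := by
    intro u hu
    exact geomRealization_mono (self_subset_thicken S n) (hIcc (hKh _ hu))
  exact hpre.subset_connectedComponentIn (show (⟨qpt a h x, hx1⟩ : ↥(torusSet a h N)) ∈ _ from hKx)
    hsub (show (⟨qpt a h y, hy1⟩ : ↥(torusSet a h N)) ∈ _ from hKy)

lemma phi_sound {a N : ℤ} {h : ℕ} (ha : 0 < a) (hN : a + (h : ℤ) < N)
    (n : ℕ) (S : Set (CoverPoset 1)) (z w : ↥(lineObj N S))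
    (hzw : ((w : ↥(lineSpace N)) : ↥(lineSpace N)) ∈
      connectedComponentIn (lineObj N S) (z : ↥(lineSpace N))) :
    (Quot.mk _ (⟨⟨qpt a h ((z : ↥(lineSpace N)) : ℝ),
        qpt_mem_torus (z : ↥(lineSpace N)).2.1 (z : ↥(lineSpace N)).2.2⟩,
        geomRealization_mono (self_subset_thicken S n) z.2⟩ :
        ↥(torObj a h N (thicken S n))) : Pi0 (torObj a h N (thicken S n))) =
      Quot.mk _ ⟨⟨qpt a h ((w : ↥(lineSpace N)) : ℝ),
        qpt_mem_torus (w : ↥(lineSpace N)).2.1 (w : ↥(lineSpace N)).2.2⟩,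
        geomRealization_mono (self_subset_thicken S n) w.2⟩ := by
  have hcomp : IsPreconnected (connectedComponentIn (lineObj N S) (z : ↥(lineSpace N))) :=
    isPreconnected_connectedComponentIn
  set D : Set ℝ := (fun u : ↥(lineSpace N) => (u : ℝ)) ''
    connectedComponentIn (lineObj N S) (z : ↥(lineSpace N)) with hD
  have hDpre : IsPreconnected D := hcomp.image _ continuous_subtype_val.continuousOn
  have hzD : ((z : ↥(lineSpace N)) : ℝ) ∈ D := ⟨_, mem_connectedComponentIn z.2, rfl⟩
  have hwD : ((w : ↥(lineSpace N)) : ℝ) ∈ D := ⟨_, hzw, rfl⟩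
  have hDsub : D ⊆ geomRealization S ∩ Set.Icc (0 : ℝ) (N : ℝ) := by
    rintro t ⟨u, hu, rfl⟩
    exact ⟨(connectedComponentIn_subset (lineObj N S) _ hu : u ∈ lineObj N S), u.2⟩
  have hord : D.OrdConnected := hDpre.ordConnected
  rcases le_total ((z : ↥(lineSpace N)) : ℝ) ((w : ↥(lineSpace N)) : ℝ) with hle | hle
  · have hIcc : Set.Icc ((z : ↥(lineSpace N)) : ℝ) ((w : ↥(lineSpace N)) : ℝ) ⊆ D :=
      hord.out hzD hwD
    exact phi_sound_aux ha hN n S hle (z : ↥(lineSpace N)).2.1 (w : ↥(lineSpace N)).2.2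
      (fun t ht => (hDsub (hIcc ht)).1) _ _ _ _
  · have hIcc : Set.Icc ((w : ↥(lineSpace N)) : ℝ) ((z : ↥(lineSpace N)) : ℝ) ⊆ D :=
      hord.out hwD hzD
    exact (phi_sound_aux ha hN n S hle (w : ↥(lineSpace N)).2.1 (z : ↥(lineSpace N)).2.2
      (fun t ht => (hDsub (hIcc ht)).1) _ _ _ _).symm

/-- The interleaving map φ from the line to the torus. -/
noncomputable def PhiMap {a N : ℤ} {h : ℕ} (ha : 0 < a) (hN : a + (h : ℤ) < N)
    (n : ℕ) (S : Set (CoverPoset 1)) :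
    (lineMapper N).obj S → (torusMapper a h N).obj (thicken S n) :=
  Quot.lift
    (fun z : ↥(lineObj N S) => (Quot.mk _
      (⟨⟨qpt a h ((z : ↥(lineSpace N)) : ℝ),
        qpt_mem_torus (z : ↥(lineSpace N)).2.1 (z : ↥(lineSpace N)).2.2⟩,
        geomRealization_mono (self_subset_thicken S n) z.2⟩ :
        ↥(torObj a h N (thicken S n))) : Pi0 (torObj a h N (thicken S n))))
    (phi_sound ha hN n S)

lemma psi_sound {a N : ℤ} {h : ℕ} (ha : 0 < a) (hN : a + (h : ℤ) < N)
    (n : ℕ) (S : Set (CoverPoset 1)) (z w : ↥(torObj a h N S))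
    (hzw : ((w : ↥(torusSet a h N)) : ↥(torusSet a h N)) ∈
      connectedComponentIn (torObj a h N S) (z : ↥(torusSet a h N))) :
    (Quot.mk _ (⟨⟨((z : ↥(torusSet a h N)) : ℝ × ℝ).2,
        (torus_snd_bounds ha hN (z : ↥(torusSet a h N)).2).1,
        (torus_snd_bounds ha hN (z : ↥(torusSet a h N)).2).2⟩,
        geomRealization_mono (self_subset_thicken S n) z.2⟩ :
        ↥(lineObj N (thicken S n))) : Pi0 (lineObj N (thicken S n))) =
      Quot.mk _ ⟨⟨((w : ↥(torusSet a h N)) : ℝ × ℝ).2,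
        (torus_snd_bounds ha hN (w : ↥(torusSet a h N)).2).1,
        (torus_snd_bounds ha hN (w : ↥(torusSet a h N)).2).2⟩,
        geomRealization_mono (self_subset_thicken S n) w.2⟩ := by
  apply pi0_sound
  have hcomp : IsPreconnected (connectedComponentIn (torObj a h N S) (z : ↥(torusSet a h N))) :=
    isPreconnected_connectedComponentIn
  set μ : ↥(torusSet a h N) → ↥(lineSpace N) := fun u =>
    ⟨(u : ℝ × ℝ).2, (torus_snd_bounds ha hN u.2).1, (torus_snd_bounds ha hN u.2).2⟩ with hμ
  have hμc : Continuous μ := Continuous.subtype_mk continuous_subtype_val.snd _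
  set D : Set ↥(lineSpace N) := μ '' connectedComponentIn (torObj a h N S)
    (z : ↥(torusSet a h N)) with hD
  have hDpre : IsPreconnected D := hcomp.image _ hμc.continuousOn
  have hDsub : D ⊆ lineObj N (thicken S n) := by
    rintro t ⟨u, hu, rfl⟩
    exact geomRealization_mono (self_subset_thicken S n)
      (connectedComponentIn_subset _ _ hu : u ∈ torObj a h N S)
  exact hDpre.subset_connectedComponentIn ⟨_, mem_connectedComponentIn z.2, rfl⟩
    hDsub ⟨_, hzw, rfl⟩

/-- The interleaving map ψ from the torus to the line. -/
noncomputable def PsiMap {a N : ℤ} {h : ℕ} (ha : 0 < a) (hN : a + (h : ℤ) < N)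
    (n : ℕ) (S : Set (CoverPoset 1)) :
    (torusMapper a h N).obj S → (lineMapper N).obj (thicken S n) :=
  Quot.lift
    (fun z : ↥(torObj a h N S) => (Quot.mk _
      (⟨⟨((z : ↥(torusSet a h N)) : ℝ × ℝ).2,
        (torus_snd_bounds ha hN (z : ↥(torusSet a h N)).2).1,
        (torus_snd_bounds ha hN (z : ↥(torusSet a h N)).2).2⟩,
        geomRealization_mono (self_subset_thicken S n) z.2⟩ :
        ↥(lineObj N (thicken S n))) : Pi0 (lineObj N (thicken S n))))
    (psi_sound ha hN n S)

lemma upper_interleaving {a N : ℤ} {h : ℕ} (ha : 0 < a) (hh : 0 < h) (hN : a + (h : ℤ) < N)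
    {n : ℕ} (h4 : h ≤ 4 * n) :
    IsInterleaving (lineMapper N) (torusMapper a h N) n := by
  refine ⟨PhiMap ha hN n, PsiMap ha hN n, ?_, ?_, ?_, ?_⟩
  · intro S T _ _ hST z
    induction z using Quot.ind with | _ x => rfl
  · intro S T _ _ hST z
    induction z using Quot.ind with | _ x => rfl
  · intro S _ z
    induction z using Quot.ind with | _ x => rfl
  · intro S hSd z
    induction z using Quot.ind with | _ x =>
    obtain ⟨K, hK, hKT, hKh, hKp, hKq⟩ :=
      key_conn ha hh hN h4 hSd (x : ↥(torusSet a h N)).2 x.2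
    refine Quot.sound ?_
    have hpre : IsPreconnected ((Subtype.val : ↥(torusSet a h N) → ℝ × ℝ) ⁻¹' K) :=
      preconn_preimage_val hKT hK
    have hsub : (Subtype.val : ↥(torusSet a h N) → ℝ × ℝ) ⁻¹' K ⊆
        torObj a h N (thicken S (n + n)) := fun u hu => hKh _ hu
    exact hpre.subset_connectedComponentIn hKq hsub hKp

end Aux6
section Aux7
open Set

lemma thicken_tau_real (i : ℤ) (k : ℕ) :
    geomRealization (thicken ({tauC 1 i} : Set (CoverPoset 1)) k) =
      Set.Ioo ((i : ℝ) - k) ((i : ℝ) + 1 + k) := by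
  apply Set.Subset.antisymm
  · have hup : ∀ U ∈ ({tauC 1 i} : Set (CoverPoset 1)),
        (U : Set ℝ) ⊆ Set.Ioo ((i : ℝ)) (((i + 1 : ℤ) : ℝ)) := by
      rintro U hU
      rw [Set.mem_singleton_iff] at hU
      subst hU
      rw [show ((tauC 1 i : CoverPoset 1) : Set ℝ) = Utau 1 i from rfl, utau_eq]
      push_cast
      exact Set.Subset.rfl
    have := realization_thicken_upper hup k
    refine this.trans ?_
    apply Set.Ioo_subset_Ioo <;> push_cast <;> linarith
  · exact realization_thicken_lower (show tauC 1 i ∈ ({tauC 1 i} : Set (CoverPoset 1)) from rfl) k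

lemma singleton_tau_downclosed (i : ℤ) :
    downSet ({tauC 1 i} : Set (CoverPoset 1)) = {tauC 1 i} := by
  ext U
  constructor
  · rintro ⟨V, hV, hUV⟩
    rw [Set.mem_singleton_iff] at hV
    subst hV
    obtain ⟨c, d, hU1, hcd, _⟩ := cover_structure U.2
    have hsub : (U : Set ℝ) ⊆ Utau 1 i := hUV
    rw [hU1, utau_eq] at hsub
    have hcast : (c : ℝ) < d := by exact_mod_cast hcd
    obtain ⟨h1, h2⟩ := (Set.Ioo_subset_Ioo_iff hcast).mp hsub
    have h1' : i ≤ c := by exact_mod_cast h1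
    have h2' : (d : ℝ) ≤ ((i + 1 : ℤ) : ℝ) := by push_cast; linarith
    have h2'' : d ≤ i + 1 := by exact_mod_cast h2'
    have hc : c = i := by omega
    have hd : d = i + 1 := by omega
    rw [Set.mem_singleton_iff]
    apply Subtype.ext
    rw [hU1, hc, hd, show ((tauC 1 i : CoverPoset 1) : Set ℝ) = Utau 1 i from rfl, utau_eq]
    push_cast
    rfl
  · rintro hU
    rw [Set.mem_singleton_iff] at hU
    exact ⟨U, by rw [hU]; rfl, le_refl U⟩

lemma line_pi0_subsingleton (N : ℤ) (T' : Set (CoverPoset 1))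
    (hord : (geomRealization T').OrdConnected) (u v : Pi0 (lineObj N T')) : u = v := by
  apply pi0_subsingleton
  apply Topology.IsInducing.subtypeVal.isPreconnected_image.mp
  show IsPreconnected (Subtype.val '' (Subtype.val ⁻¹' geomRealization T'))
  rw [Subtype.image_preimage_coe]
  exact ((Set.ordConnected_Icc (a := (0:ℝ)) (b := (N:ℝ))).inter hord).isPreconnected

lemma no_interleaving {a N : ℤ} {h : ℕ} (ha : 0 < a) (hh : 0 < h) (hN : a + (h : ℤ) < N)
    {n : ℕ} (h4 : 4 * n < h) :
    ¬ IsInterleaving (lineMapper N) (torusMapper a h N) n := by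
  rintro ⟨φ, ψ, _, _, _, comp2⟩
  set i : ℤ := a + 2 * n with hi
  set S : Set (CoverPoset 1) := {tauC 1 i} with hSdef
  have hSd : downSet S = S := singleton_tau_downclosed i
  have hiS : tauC 1 i ∈ S := rfl
  have haR : (0 : ℝ) < a := by exact_mod_cast ha
  have hNR : (a : ℝ) + h < N := by exact_mod_cast hN
  have hia : (a : ℝ) ≤ (i : ℝ) := by
    have : a ≤ i := by omega
    exact_mod_cast this
  have hih : ((i + 1 + 2 * n : ℤ) : ℝ) ≤ (a : ℝ) + h := by
    have : ((i + 1 + 2 * n : ℤ) : ℝ) ≤ ((a + h : ℤ) : ℝ) := by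
      exact_mod_cast (show i + 1 + 2 * n ≤ a + (h : ℤ) by omega)
    push_cast at this ⊢
    linarith
  have hih' : (i : ℝ) + 1 ≤ (a : ℝ) + h := by
    push_cast at hih ⊢
    have : (0 : ℝ) ≤ (n : ℝ) := Nat.cast_nonneg n
    linarith
  -- the two loop points at height i + 1/2
  have hmemT : ∀ c : ℝ, c = -1 ∨ c = 1 → ((c, (i : ℝ) + 1/2) : ℝ × ℝ) ∈ torusSet a h N := by
    intro c hc
    refine Or.inl (Or.inr ⟨?_, ⟨by linarith, by linarith⟩⟩)
    rcases hc with hc | hc <;> rw [hc] <;> [exact Or.inl rfl ; exact Or.inr rfl]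
  have hmemS : ((i : ℝ) + 1/2) ∈ geomRealization S := by
    refine mem_geomRealization hiS ?_
    rw [show ((tauC 1 i : CoverPoset 1) : Set ℝ) = Utau 1 i from rfl, utau_eq]
    constructor <;> norm_num
  set zm : ↥(torObj a h N S) :=
    ⟨⟨((-1 : ℝ), (i : ℝ) + 1/2), hmemT _ (Or.inl rfl)⟩, hmemS⟩ with hzm
  set zp : ↥(torObj a h N S) :=
    ⟨⟨((1 : ℝ), (i : ℝ) + 1/2), hmemT _ (Or.inr rfl)⟩, hmemS⟩ with hzp
  set A₀ : (torusMapper a h N).obj S := Quot.mk _ zm with hA0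
  set B₀ : (torusMapper a h N).obj S := Quot.mk _ zp with hB0
  have hψ : ψ S A₀ = ψ S B₀ := by
    apply line_pi0_subsingleton
    rw [thicken_tau_real]
    exact Set.ordConnected_Ioo
  have h1 := comp2 S hSd A₀
  have h2 := comp2 S hSd B₀
  rw [hψ] at h1
  have heq : (torusMapper a h N).map (self_subset_thicken S (n + n)) A₀ =
      (torusMapper a h N).map (self_subset_thicken S (n + n)) B₀ := h1.symm.trans h2
  -- extract component membership
  have hmem := pi0_exact (A := torObj a h N (thicken S (n + n)))
    (x := ⟨zm.1, geomRealization_mono (self_subset_thicken S (n + n)) zm.2⟩)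
    (y := ⟨zp.1, geomRealization_mono (self_subset_thicken S (n + n)) zp.2⟩) heq
  -- separation argument
  set A : Set ↥(torusSet a h N) := torObj a h N (thicken S (n + n)) with hA
  have hfst : ∀ u : ↥(torusSet a h N), u ∈ A → ((u : ℝ × ℝ).1 = -1 ∨ (u : ℝ × ℝ).1 = 1) := by
    intro u hu
    have hu2 : (u : ℝ × ℝ).2 ∈ geomRealization (thicken S (n + n)) := hu
    rw [thicken_tau_real] at hu2
    obtain ⟨hu3, hu4⟩ := hu2
    have hlow : (a : ℝ) < (u : ℝ × ℝ).2 := by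
      have : (i : ℝ) - (n + n : ℕ) = (a : ℝ) := by push_cast [hi]; ring
      linarith [this ▸ hu3]
    have hhigh : (u : ℝ × ℝ).2 < (a : ℝ) + h := by
      have : (i : ℝ) + 1 + (n + n : ℕ) ≤ (a : ℝ) + h := by
        push_cast at hih ⊢
        linarith
      linarith
    exact torus_fst_loop u.2 hlow hhigh
  set C := connectedComponentIn A
    ((⟨zm.1, geomRealization_mono (self_subset_thicken S (n + n)) zm.2⟩ : ↥A) : ↥(torusSet a h N))
  have hCpre : IsPreconnected C := isPreconnected_connectedComponentIn
  set D : Set ℝ := (fun u : ↥(torusSet a h N) => (u : ℝ × ℝ).1) '' C with hD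
  have hDpre : IsPreconnected D := hCpre.image _ continuous_subtype_val.fst.continuousOn
  have hm : (-1 : ℝ) ∈ D :=
    ⟨_, mem_connectedComponentIn (geomRealization_mono (self_subset_thicken S (n + n)) zm.2), rfl⟩
  have hp1 : (1 : ℝ) ∈ D := ⟨_, hmem, rfl⟩
  have h0D : (0 : ℝ) ∈ D := hDpre.ordConnected.out hm hp1 ⟨by norm_num, by norm_num⟩
  obtain ⟨u, huC, hu0⟩ := h0D
  have hu0' : ((u : ℝ × ℝ)).1 = 0 := hu0
  rcases hfst u (connectedComponentIn_subset _ _ huC) with h5 | h5 <;> rw [hu0'] at h5 <;>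
    norm_num at h5

end Aux7

/-- The interleaving distance between the line mapper cosheaf and the torus
mapper cosheaf with loop of height `h` is `⌈h/4⌉`. -/
theorem interleavingDist_line_torus (a N : ℤ) (h : ℕ)
    (ha : 0 < a) (hh : 0 < h) (hN : a + (h : ℤ) < N) :
    interleavingDist (lineMapper N) (torusMapper a h N) = (((h + 3) / 4 : ℕ) : ℕ∞) := by
  apply le_antisymm
  · exact sInf_le ⟨(h + 3) / 4, rfl, upper_interleaving ha hh hN (by omega)⟩
  · apply le_sInf
    rintro b ⟨n, rfl, hint⟩
    have hn : h ≤ 4 * n := by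
      by_contra hc
      exact no_interleaving ha hh hN (by omega) hint
    exact_mod_cast (show (h + 3) / 4 ≤ n by omega)
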